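/- Let k be a commutative ring and let S and T be finite lattices. For every join-preserving map λ : S → T, the k-linear maps F_S(X) → F_T(X) sending a basis element φ : X → S to λ∘φ : X → T form a natural transformation F_λ : F_S → F_T of correspondence functors. Moreover, every natural transformation Φ : F_S → F_T of correspondence functors can be written as Φ = ∑_λ u_λ F_λ for unique coefficients u_λ ∈ k, the sum running over all join-preserving maps λ : S → T; that is, the canonical k-linear map from the free k-module on the set of join-preserving maps S → T to the k-module of natural transformations F_S → F_T, sending λ to F_λ, is bijective. -/

import Mathlib

open CategoryTheory
open scoped Classical

structure CorrCat : Type 1 where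
  carrier : Type
  [fintype : Fintype carrier]

attribute [instance] CorrCat.fintype

instance : CoeSort CorrCat Type := ⟨CorrCat.carrier⟩

/-- Composition of correspondences: `corrComp R S = RS`. -/
def corrComp {X Y Z : Type*} (R : Set (Z × Y)) (S : Set (Y × X)) : Set (Z × X) :=
  {p | ∃ y, (p.1, y) ∈ R ∧ (y, p.2) ∈ S}

/-- Opposite correspondence. -/
def corrOp {X Y : Type*} (S : Set (Y × X)) : Set (X × Y) := {p | (p.2, p.1) ∈ S}

/-- Identity correspondence. -/
def deltaCorr (X : Type*) : Set (X × X) := {p | p.1 = p.2}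

instance : Category CorrCat where
  Hom X Y := Set (Y.carrier × X.carrier)
  id X := deltaCorr X.carrier
  comp {X Y Z} f g := corrComp g f
  id_comp {X Y} f := by
    show corrComp f (deltaCorr X.carrier) = f
    ext ⟨a, b⟩
    constructor
    · rintro ⟨y, hy, h⟩
      have hyb : y = b := h
      subst hyb
      exact hy
    · intro h
      exact ⟨b, h, rfl⟩
  comp_id {X Y} f := by
    show corrComp (deltaCorr Y.carrier) f = f
    ext ⟨a, b⟩
    constructor
    · rintro ⟨y, h, hy⟩
      have hay : a = y := h
      subst hay
      exact hy
    · intro h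
      exact ⟨a, rfl, h⟩
  assoc {W X Y Z} f g h := by
    show corrComp h (corrComp g f) = corrComp (corrComp h g) f
    ext ⟨a, b⟩
    constructor
    · rintro ⟨y, hy, x, hx1, hx2⟩
      exact ⟨x, ⟨y, hy, hx1⟩, hx2⟩
    · rintro ⟨x, ⟨y, hy, hx1⟩, hx2⟩
      exact ⟨y, hy, x, hx1, hx2⟩

/-- The action of a correspondence `Q ⊆ Y × X` on a function `φ : X → T`. -/
noncomputable def corrApp {T : Type*} [SemilatticeSup T] [OrderBot T]
    {X Y : Type*} [Fintype X] (Q : Set (Y × X)) (φ : X → T) : Y → T :=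
  fun y => (Finset.univ.filter fun x => (y, x) ∈ Q).sup φ

lemma corrApp_id {T : Type*} [SemilatticeSup T] [OrderBot T]
    {X : Type*} [Fintype X] (φ : X → T) : corrApp (deltaCorr X) φ = φ := by
  funext y
  have h : (Finset.univ.filter fun x => (y, x) ∈ deltaCorr X) = {y} := by
    ext x
    rw [Finset.mem_filter]
    simp [deltaCorr, eq_comm]
  unfold corrApp
  rw [h, Finset.sup_singleton]

lemma corrApp_comp {T : Type*} [SemilatticeSup T] [OrderBot T]
    {X Y Z : Type*} [Fintype X] [Fintype Y]
    (R : Set (Z × Y)) (S : Set (Y × X)) (φ : X → T) :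
    corrApp (corrComp R S) φ = corrApp R (corrApp S φ) := by
  funext z
  apply le_antisymm
  · apply Finset.sup_le
    intro x hx
    rw [Finset.mem_filter] at hx
    obtain ⟨-, y, hzy, hyx⟩ := hx
    calc φ x ≤ corrApp S φ y :=
          Finset.le_sup (Finset.mem_filter.2 ⟨Finset.mem_univ _, hyx⟩)
    _ ≤ _ := Finset.le_sup (f := corrApp S φ)
          (Finset.mem_filter.2 ⟨Finset.mem_univ _, hzy⟩)
  · apply Finset.sup_le
    intro y hy
    rw [Finset.mem_filter] at hy
    apply Finset.sup_le
    intro x hx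
    rw [Finset.mem_filter] at hx
    exact Finset.le_sup (Finset.mem_filter.2 ⟨Finset.mem_univ _, ⟨y, hy.2, hx.2⟩⟩)

variable (k : Type) [CommRing k]

/-- The correspondence functor `F_T` associated to a finite lattice `T`. -/
noncomputable def FT (T : Type) [Lattice T] [OrderBot T] [Fintype T] :
    CorrCat ⥤ ModuleCat k where
  obj X := ModuleCat.of k ((X.carrier → T) →₀ k)
  map {X Y} Q := ModuleCat.ofHom (Finsupp.lmapDomain k k (corrApp (T := T) Q))
  map_id X := by
    show ModuleCat.ofHom (Finsupp.lmapDomain k k (corrApp (deltaCorr X.carrier))) = _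
    have : (corrApp (T := T) (deltaCorr X.carrier)) = id := by
      funext φ
      exact corrApp_id φ
    rw [this, Finsupp.lmapDomain_id]
    rfl
  map_comp {X Y Z} f g := by
    show ModuleCat.ofHom (Finsupp.lmapDomain k k (corrApp (corrComp g f))) = _
    have : (corrApp (T := T) (corrComp g f)) = corrApp g ∘ corrApp f := by
      funext φ
      exact corrApp_comp g f φ
    rw [this, Finsupp.lmapDomain_comp]
    rfl

/-- A map between finite lattices is join-preserving (a morphism in the category `𝓛`)
if it commutes with arbitrary (finite) joins; in particular it sends `⊥` to `⊥`. -/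
def JoinPreserving {S T : Type*} [Lattice S] [OrderBot S] [Lattice T] [OrderBot T]
    (f : S → T) : Prop :=
  ∀ A : Finset S, f (A.sup id) = A.sup f


section Aux

open scoped Classical

lemma jp_sup {S T : Type*} [Lattice S] [OrderBot S] [Lattice T] [OrderBot T]
    {l : S → T} (hl : JoinPreserving l) {X : Type*} (A : Finset X) (φ : X → S) :
    l (A.sup φ) = A.sup (l ∘ φ) := by
  have h1 : A.sup φ = (A.image φ).sup id := by rw [Finset.sup_image]; rfl
  have h2 : A.sup (l ∘ φ) = (A.image φ).sup l := by rw [Finset.sup_image]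
  rw [h1, h2, hl]

lemma corrApp_jp {S T : Type*} [Lattice S] [OrderBot S] [Lattice T] [OrderBot T]
    {l : S → T} (hl : JoinPreserving l) {X Y : Type*} [Fintype X]
    (Q : Set (Y × X)) (φ : X → S) :
    corrApp Q (l ∘ φ) = l ∘ corrApp Q φ := by
  funext y
  simp only [corrApp, Function.comp_apply]
  exact (jp_sup hl _ φ).symm

/-- The "below `φ`" correspondence. -/
def belowCorr {X S : Type*} [Preorder S] (φ : X → S) : Set (X × S) :=
  {p | p.2 ≤ φ p.1}

lemma belowCorr_sup {X S : Type*} [Lattice S] [OrderBot S] [Fintype S]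
    (φ : X → S) (x : X) :
    (Finset.univ.filter fun s => (x, s) ∈ belowCorr φ).sup id = φ x := by
  apply le_antisymm
  · apply Finset.sup_le
    intro s hs
    exact (Finset.mem_filter.1 hs).2
  · exact Finset.le_sup (f := id)
      (Finset.mem_filter.2 ⟨Finset.mem_univ _, le_refl (φ x)⟩)

lemma corrApp_belowCorr {S : Type*} [Lattice S] [OrderBot S] [Fintype S]
    {T : Type*} [Lattice T] [OrderBot T] {X : Type*}
    (φ : X → S) {ψ : S → T} (hψ : JoinPreserving ψ) :
    corrApp (belowCorr φ) ψ = ψ ∘ φ := by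
  funext x
  have := hψ (Finset.univ.filter fun s => (x, s) ∈ belowCorr φ)
  rw [belowCorr_sup] at this
  exact this.symm

lemma jp_id {S : Type*} [Lattice S] [OrderBot S] : JoinPreserving (id : S → S) := by
  intro A; rfl

lemma corrApp_belowCorr_id {S : Type*} [Lattice S] [OrderBot S] [Fintype S]
    {X : Type*} (φ : X → S) :
    corrApp (belowCorr φ) (id : S → S) = φ := by
  rw [corrApp_belowCorr φ jp_id]; rfl

/-- The correspondence realizing the "update at `a` by the join over `A`" operator. -/
def updCorr {S : Type*} (a : S) (A : Finset S) : Set (S × S) :=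
  {p | (p.1 ≠ a ∧ p.2 = p.1) ∨ (p.1 = a ∧ p.2 ∈ A)}

/-- The "update at `a` by the join over `A`" operator on maps. -/
noncomputable def updMap {S T : Type*} [Lattice T] [OrderBot T] (a : S) (A : Finset S)
    (ψ : S → T) : S → T :=
  fun x => if x = a then A.sup ψ else ψ x

lemma corrApp_updCorr {S : Type*} [Fintype S] {T : Type*} [Lattice T] [OrderBot T]
    (a : S) (A : Finset S) (ψ : S → T) :
    corrApp (updCorr a A) ψ = updMap a A ψ := by
  funext x
  unfold corrApp updMap
  by_cases hx : x = a
  · subst hx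
    have : (Finset.univ.filter fun s => (x, s) ∈ updCorr x A) = A := by
      ext s
      simp [updCorr]
    rw [if_pos rfl, this]
  · have : (Finset.univ.filter fun s => (x, s) ∈ updCorr a A) = {x} := by
      ext s
      simp only [updCorr, Set.mem_setOf_eq, Finset.mem_filter, Finset.mem_univ,
        true_and, Finset.mem_singleton]
      constructor
      · rintro (⟨-, h⟩ | ⟨h, -⟩)
        · exact h
        · exact absurd h hx
      · intro h
        exact Or.inl ⟨hx, h⟩
    rw [if_neg hx, this, Finset.sup_singleton]

lemma updMap_id {S : Type*} [Lattice S] [OrderBot S] {A : Finset S} :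
    updMap (A.sup id) A (id : S → S) = id := by
  funext x
  unfold updMap
  by_cases hx : x = A.sup id
  · subst hx
    rw [if_pos rfl]
    rfl
  · rw [if_neg hx]

lemma updMap_idem {S T : Type*} [Lattice T] [OrderBot T] (a : S) (A : Finset S)
    (ψ : S → T) : updMap a A (updMap a A ψ) = updMap a A ψ := by
  funext x
  unfold updMap
  by_cases hx : x = a
  · rw [if_pos hx, if_pos hx]
    apply le_antisymm
    · apply Finset.sup_le
      intro s hs
      by_cases hsa : s = a
      · rw [if_pos hsa]
      · rw [if_neg hsa]
        exact Finset.le_sup hs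
    · apply Finset.sup_le
      intro s hs
      refine le_trans ?_
        (Finset.le_sup (f := fun s => if s = a then A.sup ψ else ψ s) hs)
      by_cases hsa : s = a
      · rw [if_pos hsa]
        exact Finset.le_sup hs
      · rw [if_neg hsa]
  · rw [if_neg hx, if_neg hx]

end Aux

/-- For every join-preserving map `l : S → T`, the maps
`F_S(X) → F_T(X)`, `φ ↦ l ∘ φ` on basis elements, are natural in `X`; and every natural
transformation `F_S → F_T` is a linear combination `∑_l u_l F_l` over join-preserving
maps `l : S → T`, with unique coefficients `u_l ∈ k`. -/
theorem FT_fully_faithful (k : Type) [CommRing k]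
    (S T : Type) [Lattice S] [Fintype S] [BoundedOrder S]
    [Lattice T] [Fintype T] [BoundedOrder T] :
    (∀ (l : S → T), JoinPreserving l →
      ∀ (X Y : CorrCat) (Q : X ⟶ Y) (v : (X.carrier → S) →₀ k),
        (FT k T).map Q (Finsupp.mapDomain (fun φ => l ∘ φ) v) =
          Finsupp.mapDomain (fun φ => l ∘ φ) ((FT k S).map Q v)) ∧
    (∀ Φ : FT k S ⟶ FT k T, ∃! u : {f : S → T // JoinPreserving f} →₀ k,
      ∀ (X : CorrCat) (φ : X.carrier → S),
        Φ.app X (Finsupp.single φ (1 : k)) =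
          u.sum fun l c => Finsupp.single ((l : S → T) ∘ φ) c) := by
  have FT_map_apply : ∀ (T' : Type) [Lattice T'] [OrderBot T'] [Fintype T']
      (X Y : CorrCat) (Q : X ⟶ Y) (v : (X.carrier → T') →₀ k),
      (FT k T').map Q v = Finsupp.mapDomain (corrApp Q) v := by
    intro T' _ _ _ X Y Q v
    rfl
  have natur : ∀ (Φ : FT k S ⟶ FT k T) (X Y : CorrCat) (Q : X ⟶ Y)
      (v : (X.carrier → S) →₀ k),
      Φ.app Y ((FT k S).map Q v) = (FT k T).map Q (Φ.app X v) := by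
    intro Φ X Y Q v
    have h := Φ.naturality Q
    have h2 := LinearMap.congr_fun (congrArg ModuleCat.Hom.hom h) v
    exact h2
  constructor
  · -- Naturality of F_l for join-preserving l
    intro l hl X Y Q v
    rw [FT_map_apply, FT_map_apply, ← Finsupp.mapDomain_comp, ← Finsupp.mapDomain_comp]
    congr 1
    funext φ
    exact corrApp_jp hl Q φ
  · intro Φ
    set Xs : CorrCat := ⟨S⟩ with hXs
    set w : (S → T) →₀ k := Φ.app Xs (Finsupp.single id 1) with hw
    -- key evaluation formula
    have hkey : ∀ (X : CorrCat) (φ : X.carrier → S),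
        Φ.app X (Finsupp.single φ 1) =
          Finsupp.mapDomain (corrApp (belowCorr φ)) w := by
      intro X φ
      have hQ : (FT k S).map (show Xs ⟶ X from belowCorr φ) (Finsupp.single id 1) =
          Finsupp.single φ 1 := by
        rw [FT_map_apply, Finsupp.mapDomain_single, corrApp_belowCorr_id]
      have := natur Φ Xs X (belowCorr φ) (Finsupp.single id 1)
      rw [hQ] at this
      rw [this]
      exact FT_map_apply T Xs X (belowCorr φ) w
    -- support of w consists of join-preserving maps
    have hsupp : ∀ θ : S → T, ¬ JoinPreserving θ → w θ = 0 := by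
      intro θ hθ
      obtain ⟨A, hA⟩ := not_forall.1 hθ
      set a : S := A.sup id with ha
      have hQ : (FT k S).map (show Xs ⟶ Xs from updCorr a A) (Finsupp.single id 1) =
          Finsupp.single id 1 := by
        rw [FT_map_apply, Finsupp.mapDomain_single, corrApp_updCorr, updMap_id]
      have hnat := natur Φ Xs Xs (updCorr a A) (Finsupp.single id 1)
      rw [hQ] at hnat
      have hnat : w = Finsupp.mapDomain (corrApp (updCorr a A)) w :=
        hnat.trans (FT_map_apply T Xs Xs (updCorr a A) w)
      have hw2 : w = Finsupp.mapDomain (updMap a A) w := by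
        have : corrApp (updCorr a A) = updMap a A (T := T) := by
          funext ψ
          exact corrApp_updCorr a A ψ
        rw [← this, ← hnat]
      have hrange : θ ∉ Set.range (updMap a A) := by
        rintro ⟨ψ, hψ⟩
        have hfix : updMap a A θ = θ := by
          rw [← hψ, updMap_idem]
        have : updMap a A θ a = θ a := by rw [hfix]
        rw [updMap, if_pos rfl] at this
        exact hA this.symm
      rw [hw2]
      exact Finsupp.mapDomain_notin_range w θ hrange
    have hsupp' : ∀ θ ∈ w.support, JoinPreserving θ := by
      intro θ hθ
      by_contra h
      exact Finsupp.mem_support_iff.1 hθ (hsupp θ h)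
    refine ⟨Finsupp.subtypeDomain JoinPreserving w, ?_, ?_⟩
    · intro X φ
      rw [hkey X φ]
      have hidx := Finsupp.sum_subtypeDomain_index (p := JoinPreserving)
        (v := w) (h := fun ψ c => Finsupp.single (ψ ∘ φ) c) hsupp'
      refine Eq.trans ?_ hidx.symm
      apply Finsupp.sum_congr
      intro ψ hψ
      rw [corrApp_belowCorr φ (hsupp' ψ hψ)]
    · intro u' hu'
      have h0 := hu' Xs id
      have hcomp : (fun (l : {f : S → T // JoinPreserving f}) (c : k) =>
          Finsupp.single ((l : S → T) ∘ id) c) =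
          fun (l : {f : S → T // JoinPreserving f}) (c : k) =>
            Finsupp.single (l : S → T) c := by
        funext l c
        rw [Function.comp_id]
      rw [hcomp] at h0
      have hmd : w = Finsupp.mapDomain Subtype.val u' := h0
      ext l
      rw [Finsupp.subtypeDomain_apply, hmd,
        Finsupp.mapDomain_apply Subtype.val_injective]
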